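/- For K ≥ 2, define M_K = Π_{p ≤ K} p^(⌊log_p K⌋ + 1) (product over primes p ≤ K). Then for every 0 ≤ k ≤ K, every prime p ≤ K, and every integer a ≥ 1, we have (M_K − 1) mod p^a ≥ k mod p^a. -/
import Mathlib


theorem stmt_4 (K : ℕ) (hK : 2 ≤ K)
    (M : ℕ) (hM : M = ∏ p ∈ (Finset.range (K + 1)).filter Nat.Prime,
      p ^ (Nat.log p K + 1)) :
    ∀ k ≤ K, ∀ p : ℕ, p.Prime → p ≤ K → ∀ a : ℕ, 1 ≤ a →
      k % p ^ a ≤ (M - 1) % p ^ a := by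
  intro k hk p hp hpK a ha
  set L := Nat.log p K + 1 with hL
  have hpmem : p ∈ (Finset.range (K + 1)).filter Nat.Prime := by
    simp [Finset.mem_filter, Nat.lt_succ_iff, hpK, hp]
  have hdvd : p ^ L ∣ M := hM ▸ Finset.dvd_prod_of_mem _ hpmem
  have hMpos : 0 < M := by
    rw [hM]
    exact Finset.prod_pos fun q hq =>
      pow_pos ((Finset.mem_filter.mp hq).2.pos) _
  have hKlt : K < p ^ L := Nat.lt_pow_succ_log_self hp.one_lt K
  have key : ∀ b, b ≤ L → (M - 1) % p ^ b = p ^ b - 1 := by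
    intro b hb
    obtain ⟨q, hq⟩ := (pow_dvd_pow p hb).trans hdvd
    rw [mul_comm] at hq
    have hpb : 1 ≤ p ^ b := Nat.one_le_pow _ _ hp.pos
    have hq1 : 1 ≤ q := Nat.pos_of_ne_zero fun h => by simp [h] at hq; omega
    obtain ⟨n, rfl⟩ : ∃ n, q = n + 1 := ⟨q - 1, by omega⟩
    have hexp : (n + 1) * p ^ b = n * p ^ b + p ^ b := by ring
    have hrw : M - 1 = (p ^ b - 1) + n * p ^ b := by omega
    rw [hrw, Nat.add_mul_mod_self_right, Nat.mod_eq_of_lt (by omega)]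
  rcases le_or_gt a L with hle | hlt
  · have := key a hle
    rw [this]
    have : k % p ^ a < p ^ a := Nat.mod_lt _ (pow_pos hp.pos _)
    omega
  · have hLa : (M - 1) % p ^ a % p ^ L = (M - 1) % p ^ L :=
      Nat.mod_mod_of_dvd _ (pow_dvd_pow p hlt.le)
    have h1 : (M - 1) % p ^ L = p ^ L - 1 := key L le_rfl
    have h2 : (M - 1) % p ^ a % p ^ L ≤ (M - 1) % p ^ a := Nat.mod_le _ _
    have h3 : k % p ^ a ≤ k := Nat.mod_le _ _
    omega
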